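/- If a matrix A ∈ ℝ^{n×N} satisfies the restricted isometry property with constant δ_{(a+1)k} < (a − γ²)/(a + γ²) for some a > 1 and γ ≥ 1, then A satisfies the null space property of order k with constant c₀ = 1 + √(1 + δ_{ak}) / (√a · √(1 − δ_{(a+1)k})): for every h in the null space of A and every index set T of size at most k, ‖h‖₁ ≤ c₀ ‖h restricted to the complement of T‖₁. -/

import Mathlib

open Matrix Finset

/-- `x` is `s`-sparse: at most `s` nonzero entries. -/
def IsSparse {N : ℕ} (s : ℕ) (x : Fin N → ℝ) : Prop :=
  (Finset.univ.filter (fun i => x i ≠ 0)).card ≤ s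

/-- `A` satisfies the RIP bounds with constant `δ` at sparsity level `s`. -/
def HasRIPBound {n N : ℕ} (A : Matrix (Fin n) (Fin N) ℝ) (s : ℕ) (δ : ℝ) : Prop :=
  ∀ x : Fin N → ℝ, IsSparse s x →
    (1 - δ) * (∑ i, (x i)^2) ≤ (∑ j, (A.mulVec x j)^2) ∧
      (∑ j, (A.mulVec x j)^2) ≤ (1 + δ) * (∑ i, (x i)^2)

noncomputable def E2 {m : ℕ} (x : Fin m → ℝ) : ℝ := Real.sqrt (∑ i, x i ^ 2)

lemma E2_nonneg {m : ℕ} (x : Fin m → ℝ) : 0 ≤ E2 x := Real.sqrt_nonneg _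

lemma E2_neg {m : ℕ} (x : Fin m → ℝ) : E2 (-x) = E2 x := by simp [E2]

lemma E2_eq_norm {m : ℕ} (x : Fin m → ℝ) :
    E2 x = ‖(WithLp.equiv 2 (Fin m → ℝ)).symm x‖ := by
  rw [EuclideanSpace.norm_eq]
  simp [E2, Real.norm_eq_abs, sq_abs]

lemma E2_sum_le {m : ℕ} {ι : Type*} (s : Finset ι) (F : ι → Fin m → ℝ) :
    E2 (∑ j ∈ s, F j) ≤ ∑ j ∈ s, E2 (F j) := by
  simp_rw [E2_eq_norm]
  have : (WithLp.equiv 2 (Fin m → ℝ)).symm (∑ j ∈ s, F j)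
      = ∑ j ∈ s, (WithLp.equiv 2 (Fin m → ℝ)).symm (F j) := by
    simp [WithLp.equiv]
  rw [this]
  exact norm_sum_le _ _

noncomputable def Rst {N : ℕ} (h : Fin N → ℝ) (S : Finset (Fin N)) : Fin N → ℝ :=
  fun x => if x ∈ S then h x else 0

lemma sum_sq_Rst {N : ℕ} (h : Fin N → ℝ) (S : Finset (Fin N)) :
    ∑ i, (Rst h S i) ^ 2 = ∑ i ∈ S, (h i) ^ 2 := by
  have : ∀ i, (Rst h S i) ^ 2 = if i ∈ S then (h i)^2 else 0 := by
    intro i; unfold Rst; split <;> simp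
  simp_rw [this]
  rw [Finset.sum_ite_mem, Finset.univ_inter]

lemma sparse_Rst {N : ℕ} (h : Fin N → ℝ) (S : Finset (Fin N)) {s : ℕ} (hs : S.card ≤ s) :
    IsSparse s (Rst h S) := by
  refine le_trans (Finset.card_le_card ?_) hs
  intro i hi
  have hi2 := (Finset.mem_filter.mp hi).2
  simp only [Rst] at hi2
  by_contra hmem
  exact hi2 (by simp [hmem])

lemma Rst_union {N : ℕ} (h : Fin N → ℝ) {S S' : Finset (Fin N)} (hd : Disjoint S S') :
    Rst h (S ∪ S') = Rst h S + Rst h S' := by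
  funext x
  simp only [Rst, Pi.add_apply, Finset.mem_union]
  by_cases hx : x ∈ S
  · have : x ∉ S' := fun hx' => (Finset.disjoint_left.mp hd hx) hx'
    simp [hx, this]
  · by_cases hx' : x ∈ S' <;> simp [hx, hx']

lemma rip_upper {n N : ℕ} {A : Matrix (Fin n) (Fin N) ℝ} {s : ℕ} {δ : ℝ}
    (hA : HasRIPBound A s δ) (hδ : 0 ≤ 1 + δ) {x : Fin N → ℝ} (hx : IsSparse s x) :
    E2 (A.mulVec x) ≤ Real.sqrt (1 + δ) * E2 x := by
  have := (hA x hx).2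
  calc E2 (A.mulVec x) = Real.sqrt (∑ j, (A.mulVec x j)^2) := rfl
    _ ≤ Real.sqrt ((1 + δ) * ∑ i, (x i)^2) := Real.sqrt_le_sqrt this
    _ = Real.sqrt (1 + δ) * E2 x := by rw [Real.sqrt_mul hδ]; rfl

lemma rip_lower {n N : ℕ} {A : Matrix (Fin n) (Fin N) ℝ} {s : ℕ} {δ : ℝ}
    (hA : HasRIPBound A s δ) (hδ : 0 ≤ 1 - δ) {x : Fin N → ℝ} (hx : IsSparse s x) :
    Real.sqrt (1 - δ) * E2 x ≤ E2 (A.mulVec x) := by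
  have := (hA x hx).1
  calc Real.sqrt (1 - δ) * E2 x = Real.sqrt ((1 - δ) * ∑ i, (x i)^2) := by
        rw [Real.sqrt_mul hδ]; rfl
    _ ≤ Real.sqrt (∑ j, (A.mulVec x j)^2) := Real.sqrt_le_sqrt this
    _ = E2 (A.mulVec x) := rfl

lemma exists_antitone_enum {N : ℕ} (h : Fin N → ℝ) (s : Finset (Fin N)) :
    ∃ e : Fin s.card → Fin N, Function.Injective e ∧ (∀ i, e i ∈ s) ∧
      ∀ i j : Fin s.card, i ≤ j → |h (e j)| ≤ |h (e i)| := by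
  let e0 : Fin s.card ≃o s := s.orderIsoOfFin rfl
  let f : Fin s.card → ℝ := fun i => -|h (e0 i : Fin N)|
  let σ := Tuple.sort f
  refine ⟨fun i => (e0 (σ i) : Fin N), ?_, fun i => (e0 (σ i)).2, ?_⟩
  · intro i j hij
    exact σ.injective (e0.injective (Subtype.coe_injective hij))
  · intro i j hij
    have := Tuple.monotone_sort f hij
    simp only [Function.comp_apply, f, neg_le_neg_iff] at this
    exact this

/-- RIP implies the null space property of order `k` with constant
`c₀ = 1 + √(1+δ_{ak}) / (√a √(1-δ_{(a+1)k}))`. -/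
theorem stmt_2 {n N : ℕ} (A : Matrix (Fin n) (Fin N) ℝ) (k a : ℕ) (γ δak δa1k : ℝ)
    (ha : 1 < a) (hγ : 1 ≤ γ)
    (hδak0 : 0 ≤ δak) (hδa1k0 : 0 ≤ δa1k)
    (hRIPak : HasRIPBound A (a * k) δak)
    (hRIPa1k : HasRIPBound A ((a + 1) * k) δa1k)
    (hδ : δa1k < ((a : ℝ) - γ^2) / ((a : ℝ) + γ^2)) :
    ∀ h : Fin N → ℝ, A.mulVec h = 0 → ∀ T : Finset (Fin N), T.card ≤ k →
      ∑ i, |h i| ≤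
        (1 + Real.sqrt (1 + δak) / (Real.sqrt a * Real.sqrt (1 - δa1k))) *
          ∑ i ∈ Tᶜ, |h i| := by
  intro h hAh T hT
  have ha1 : (1:ℝ) < (a:ℝ) := by exact_mod_cast ha
  have hγ2 : (1:ℝ) ≤ γ^2 := (one_le_pow_iff_of_nonneg (by linarith) two_ne_zero).mpr hγ
  have hδ1 : δa1k < 1 := by
    refine hδ.trans_le ?_
    rw [div_le_one (by nlinarith)]
    nlinarith
  have h1δ : 0 < 1 - δa1k := by linarith
  have sq1δ : 0 < Real.sqrt (1 - δa1k) := Real.sqrt_pos.mpr h1δ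
  have sqa : 0 < Real.sqrt a := Real.sqrt_pos.mpr (by linarith)
  have hWnn : (0:ℝ) ≤ ∑ i ∈ Tᶜ, |h i| := Finset.sum_nonneg fun _ _ => abs_nonneg _
  set c1 : ℝ := Real.sqrt (1 + δak) / (Real.sqrt a * Real.sqrt (1 - δa1k)) with hc1
  have hc1nn : 0 ≤ c1 := div_nonneg (Real.sqrt_nonneg _) (by positivity)
  have hsplit : ∑ i, |h i| = ∑ i ∈ T, |h i| + ∑ i ∈ Tᶜ, |h i| :=
    (Finset.sum_add_sum_compl T _).symm
  rw [hsplit, add_mul, one_mul]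
  have key : ∑ i ∈ T, |h i| ≤ c1 * ∑ i ∈ Tᶜ, |h i| := by
    rcases Nat.eq_zero_or_pos k with hk | hk
    · have hTe : T = ∅ := Finset.card_eq_zero.mp (Nat.le_antisymm (hk ▸ hT) (Nat.zero_le _))
      rw [hTe]
      simp only [Finset.sum_empty]
      exact mul_nonneg hc1nn (Finset.sum_nonneg fun _ _ => abs_nonneg _)
    · set ak : ℕ := a * k with hak_def
      have hakpos : 0 < ak := Nat.mul_pos (by omega) hk
      obtain ⟨e, he_inj, he_mem, he_anti⟩ := exists_antitone_enum h (Tᶜ)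
      have himg : Finset.univ.image e = Tᶜ := by
        apply Finset.eq_of_subset_of_card_le
        · intro x hx
          obtain ⟨i, _, rfl⟩ := Finset.mem_image.mp hx
          exact he_mem i
        · rw [Finset.card_image_of_injective _ he_inj, Finset.card_univ, Fintype.card_fin]
      set I : ℕ → Finset (Fin Tᶜ.card) := fun j => univ.filter (fun i => (i : ℕ) / ak = j)
        with hI_def
      set B : ℕ → Finset (Fin N) := fun j => (I j).image e with hB_def
      have hB_sub : ∀ j, B j ⊆ Tᶜ := by
        intro j x hx
        obtain ⟨i, _, rfl⟩ := Finset.mem_image.mp hx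
        exact he_mem i
      have hI_mem : ∀ (j : ℕ) (i : Fin Tᶜ.card), i ∈ I j ↔ (i : ℕ) / ak = j := by
        intro j i; simp [hI_def]
      have hI_bounds : ∀ (j : ℕ) (i : Fin Tᶜ.card), i ∈ I j → ak * j ≤ (i:ℕ) ∧ (i:ℕ) < ak * (j+1) := by
        intro j i hi
        rw [hI_mem] at hi
        subst hi
        exact ⟨Nat.mul_div_le _ _, Nat.lt_mul_div_succ _ hakpos⟩
      have hI_card_le : ∀ j, (I j).card ≤ ak := by
        intro j
        have hle : (I j).card ≤ (Finset.Ico (ak*j) (ak*(j+1))).card := by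
          refine Finset.card_le_card_of_injOn (f := fun i => (i : ℕ)) ?_ ?_
          · intro i hi
            rw [Finset.mem_coe, Finset.mem_Ico]
            exact hI_bounds j i hi
          · intro x _ y _ hxy
            exact Fin.val_injective hxy
        calc (I j).card ≤ (Finset.Ico (ak*j) (ak*(j+1))).card := hle
          _ = ak := by rw [Nat.card_Ico]; ring_nf; omega
      have hsum_e : ∑ x ∈ Tᶜ, |h x| = ∑ i : Fin Tᶜ.card, |h (e i)| := by
        conv_lhs => rw [← himg]
        exact Finset.sum_image (fun x _ y _ hxy => he_inj hxy)
      set S : ℕ → ℝ := fun j => ∑ i ∈ I j, |h (e i)| with hS_def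
      have hS_nn : ∀ j, 0 ≤ S j := fun j => Finset.sum_nonneg fun _ _ => abs_nonneg _
      -- block ℓ² bound
      have hblock : ∀ j : ℕ, E2 (Rst h (B (j+1))) ≤ S j / Real.sqrt ak := by
        intro j
        have hsq : ∑ i, (Rst h (B (j+1)) i)^2 = ∑ i ∈ I (j+1), (h (e i))^2 := by
          rw [sum_sq_Rst]
          have : B (j+1) = (I (j+1)).image e := rfl
          rw [this, Finset.sum_image (fun x _ y _ hxy => he_inj hxy)]
        have hE2eq : E2 (Rst h (B (j+1))) = Real.sqrt (∑ i ∈ I (j+1), (h (e i))^2) := by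
          rw [← hsq]; rfl
        rcases Finset.eq_empty_or_nonempty (I (j+1)) with hemp | hne
        · rw [hE2eq, hemp]
          simp only [Finset.sum_empty, Real.sqrt_zero]
          positivity
        · obtain ⟨i0, hi0⟩ := hne
          have hMpos : 0 < Tᶜ.card := Fin.pos_iff_nonempty.mpr ⟨i0⟩
          have hIj_card_ge : ak ≤ (I j).card := by
            have hlift : ∀ t ∈ Finset.Ico (ak*j) (ak*(j+1)), t < Tᶜ.card := by
              intro t ht
              rw [Finset.mem_Ico] at ht
              calc t < ak * (j+1) := ht.2
                _ ≤ (i0 : ℕ) := (hI_bounds (j+1) i0 hi0).1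
                _ < Tᶜ.card := i0.isLt
            have hle : (Finset.Ico (ak*j) (ak*(j+1))).card ≤ (I j).card := by
              refine Finset.card_le_card_of_injOn
                (f := fun t => (⟨t % Tᶜ.card, Nat.mod_lt _ hMpos⟩ : Fin Tᶜ.card)) ?_ ?_
              · intro t ht
                have htM : t < Tᶜ.card := hlift t ht
                rw [Finset.mem_coe, Finset.mem_Ico] at ht
                rw [Finset.mem_coe, hI_mem]
                simp only [Nat.mod_eq_of_lt htM]
                refine Nat.div_eq_of_lt_le ?_ ?_
                · calc j * ak = ak * j := by ring
                    _ ≤ t := ht.1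
                · calc t < ak * (j+1) := ht.2
                    _ = (j+1) * ak := by ring
              · intro x hx y hy hxy
                have hxM := hlift x hx
                have hyM := hlift y hy
                have := congrArg Fin.val hxy
                simpa [Nat.mod_eq_of_lt hxM, Nat.mod_eq_of_lt hyM] using this
            calc ak = (Finset.Ico (ak*j) (ak*(j+1))).card := by
                  rw [Nat.card_Ico]; ring_nf; omega
              _ ≤ (I j).card := hle
          have hIj_card : (I j).card = ak := le_antisymm (hI_card_le j) hIj_card_ge
          have hpt : ∀ i ∈ I (j+1), |h (e i)| ≤ S j / ak := by
            intro i hi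
            rw [le_div_iff₀ (by exact_mod_cast hakpos)]
            have hterm : ∀ i' ∈ I j, |h (e i)| ≤ |h (e i')| := by
              intro i' hi'
              apply he_anti
              have h1 := (hI_bounds j i' hi').2
              have h2 := (hI_bounds (j+1) i hi).1
              exact Fin.le_def.mpr (le_of_lt (lt_of_lt_of_le h1 h2))
            calc |h (e i)| * ak = (I j).card • |h (e i)| := by
                  rw [hIj_card, nsmul_eq_mul]; ring
              _ = ∑ _i' ∈ I j, |h (e i)| := (Finset.sum_const _).symm
              _ ≤ ∑ i' ∈ I j, |h (e i')| := Finset.sum_le_sum hterm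
          have hsum_le : ∑ i ∈ I (j+1), (h (e i))^2 ≤ (S j)^2 / ak := by
            have hterm2 : ∀ i ∈ I (j+1), (h (e i))^2 ≤ (S j / ak)^2 := by
              intro i hi
              rw [← sq_abs]
              exact pow_le_pow_left₀ (abs_nonneg _) (hpt i hi) 2
            calc ∑ i ∈ I (j+1), (h (e i))^2 ≤ ∑ _i ∈ I (j+1), (S j / ak)^2 :=
                  Finset.sum_le_sum hterm2
              _ = (I (j+1)).card * (S j / ak)^2 := by rw [Finset.sum_const, nsmul_eq_mul]
              _ ≤ (ak : ℝ) * (S j / ak)^2 := by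
                  refine mul_le_mul_of_nonneg_right ?_ (sq_nonneg _)
                  exact_mod_cast hI_card_le (j+1)
              _ = (S j)^2 / ak := by
                  have : (ak:ℝ) ≠ 0 := by exact_mod_cast hakpos.ne'
                  field_simp
          rw [hE2eq]
          calc Real.sqrt (∑ i ∈ I (j+1), (h (e i))^2) ≤ Real.sqrt ((S j)^2 / ak) :=
                Real.sqrt_le_sqrt hsum_le
            _ = Real.sqrt ((S j)^2) / Real.sqrt ak := Real.sqrt_div (sq_nonneg _) _
            _ = S j / Real.sqrt ak := by rw [Real.sqrt_sq (hS_nn j)]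
      -- summing the blocks
      have hfiber : ∑ j ∈ Finset.range (Tᶜ.card+1), S j = ∑ i : Fin Tᶜ.card, |h (e i)| := by
        refine Finset.sum_fiberwise_of_maps_to ?_ _
        intro i _
        rw [Finset.mem_range]
        calc (i : ℕ) / ak ≤ (i : ℕ) := Nat.div_le_self _ _
          _ < Tᶜ.card + 1 := Nat.lt_succ_of_lt i.isLt
      have hsum_S : ∑ j ∈ Finset.range Tᶜ.card, S j ≤ ∑ x ∈ Tᶜ, |h x| := by
        rw [hsum_e, ← hfiber]
        exact Finset.sum_le_sum_of_subset_of_nonneg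
          (Finset.range_subset_range.mpr (Nat.le_succ Tᶜ.card)) (fun j _ _ => hS_nn j)
      have hsqak : (0:ℝ) < Real.sqrt ak := Real.sqrt_pos.mpr (by exact_mod_cast hakpos)
      have hblocks_sum : ∑ j ∈ Finset.range Tᶜ.card, E2 (Rst h (B (j+1)))
          ≤ (∑ x ∈ Tᶜ, |h x|) / Real.sqrt ak := by
        calc ∑ j ∈ Finset.range Tᶜ.card, E2 (Rst h (B (j+1)))
            ≤ ∑ j ∈ Finset.range Tᶜ.card, S j / Real.sqrt ak :=
              Finset.sum_le_sum (fun j _ => hblock j)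
          _ = (∑ j ∈ Finset.range Tᶜ.card, S j) / Real.sqrt ak := by rw [Finset.sum_div]
          _ ≤ (∑ x ∈ Tᶜ, |h x|) / Real.sqrt ak := by
              gcongr
      -- decomposition of h
      have hdis : Disjoint T (B 0) := by
        rw [Finset.disjoint_left]
        intro x hx hxB
        exact (Finset.mem_compl.mp (hB_sub 0 hxB)) hx
      have hdecomp : h = Rst h (T ∪ B 0) + ∑ j ∈ Finset.range Tᶜ.card, Rst h (B (j+1)) := by
        funext x
        simp only [Pi.add_apply, Finset.sum_apply, Rst]
        by_cases hx : x ∈ T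
        · have hxB : ∀ j, x ∉ B j := fun j hxB => (Finset.mem_compl.mp (hB_sub j hxB)) hx
          rw [Finset.sum_eq_zero (fun j _ => if_neg (hxB (j+1)) : ∀ j ∈ Finset.range Tᶜ.card,
            (if x ∈ B (j+1) then h x else 0) = 0)]
          rw [if_pos (Finset.mem_union_left _ hx), add_zero]
        · have hxc : x ∈ Tᶜ := Finset.mem_compl.mpr hx
          rw [← himg] at hxc
          obtain ⟨i, -, rfl⟩ := Finset.mem_image.mp hxc
          have hmemB : ∀ j, e i ∈ B j ↔ (i:ℕ)/ak = j := by
            intro j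
            constructor
            · intro hm
              obtain ⟨i', hi', hei⟩ := Finset.mem_image.mp hm
              exact (hI_mem j i).mp (by rwa [he_inj hei] at hi')
            · intro hj
              exact Finset.mem_image_of_mem e ((hI_mem j i).mpr hj)
          have hRB : ∀ j, (if e i ∈ B j then h (e i) else 0)
              = if (i:ℕ)/ak = j then h (e i) else 0 := by
            intro j
            by_cases hj : (i:ℕ)/ak = j
            · rw [if_pos hj]; exact if_pos ((hmemB j).mpr hj)
            · rw [if_neg hj]; exact if_neg (fun hm => hj ((hmemB j).mp hm))
          have hnT : e i ∉ T := hx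
          have hSfx : (if e i ∈ T ∪ B 0 then h (e i) else 0)
              = if (i:ℕ)/ak = 0 then h (e i) else 0 := by
            by_cases h0 : (i:ℕ)/ak = 0
            · rw [if_pos h0]
              exact if_pos (Finset.mem_union_right _ ((hmemB 0).mpr h0))
            · rw [if_neg h0]
              refine if_neg ?_
              rw [Finset.mem_union]
              rintro (hc | hc)
              · exact hnT hc
              · exact h0 ((hmemB 0).mp hc)
          rw [hSfx, Finset.sum_congr rfl (fun j _ => hRB (j+1))]
          have hdivlt : (i:ℕ)/ak ≤ (i:ℕ) := Nat.div_le_self _ _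
          have hiM : (i:ℕ) < Tᶜ.card := i.isLt
          rcases Nat.eq_zero_or_pos ((i:ℕ)/ak) with h0 | hp
          · rw [if_pos h0, Finset.sum_eq_zero (fun j _ => if_neg (by omega)), add_zero]
          · obtain ⟨m, hm⟩ : ∃ m, (i:ℕ)/ak = m+1 := ⟨(i:ℕ)/ak - 1, by omega⟩
            rw [if_neg (by omega), zero_add]
            have hcongr : ∀ j ∈ Finset.range Tᶜ.card,
                (if (i:ℕ)/ak = j+1 then h (e i) else 0) = (if j = m then h (e i) else 0) := by
              intro j _
              refine if_congr ?_ rfl rfl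
              omega
            rw [Finset.sum_congr rfl hcongr,
              Finset.sum_ite_eq' (Finset.range Tᶜ.card) m (fun _ => h (e i)),
              if_pos (Finset.mem_range.mpr (by omega))]
      -- apply A
      have hlin : A.mulVec h = A.mulVec (Rst h (T ∪ B 0))
          + ∑ j ∈ Finset.range Tᶜ.card, A.mulVec (Rst h (B (j+1))) := by
        conv_lhs => rw [hdecomp]
        rw [Matrix.mulVec_add]
        congr 1
        have := map_sum (A.mulVecLin) (fun j => Rst h (B (j+1))) (Finset.range Tᶜ.card)
        simp only [Matrix.mulVecLin_apply] at this
        exact this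
      have hAS : A.mulVec (Rst h (T ∪ B 0))
          = - ∑ j ∈ Finset.range Tᶜ.card, A.mulVec (Rst h (B (j+1))) := by
        rw [hAh] at hlin
        exact eq_neg_of_add_eq_zero_left hlin.symm
      -- sparsity
      have hB0card : (B 0).card ≤ ak := (Finset.card_image_le).trans (hI_card_le 0)
      have hSf_sp : IsSparse ((a+1)*k) (Rst h (T ∪ B 0)) := by
        refine sparse_Rst h _ ?_
        calc (T ∪ B 0).card ≤ T.card + (B 0).card := Finset.card_union_le _ _
          _ ≤ k + ak := Nat.add_le_add hT hB0card
          _ = (a+1)*k := by rw [hak_def]; ring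
      have hB_sp : ∀ j, IsSparse (a*k) (Rst h (B (j+1))) := fun j =>
        sparse_Rst h _ ((Finset.card_image_le).trans (hI_card_le (j+1)))
      -- the main chain
      have chain1 : Real.sqrt (1-δa1k) * E2 (Rst h (T ∪ B 0))
          ≤ Real.sqrt (1+δak) * ((∑ x ∈ Tᶜ, |h x|) / Real.sqrt ak) := by
        calc Real.sqrt (1-δa1k) * E2 (Rst h (T ∪ B 0))
            ≤ E2 (A.mulVec (Rst h (T ∪ B 0))) := rip_lower hRIPa1k (le_of_lt h1δ) hSf_sp
          _ = E2 (∑ j ∈ Finset.range Tᶜ.card, A.mulVec (Rst h (B (j+1)))) := by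
              rw [hAS, E2_neg]
          _ ≤ ∑ j ∈ Finset.range Tᶜ.card, E2 (A.mulVec (Rst h (B (j+1)))) := E2_sum_le _ _
          _ ≤ ∑ j ∈ Finset.range Tᶜ.card, Real.sqrt (1+δak) * E2 (Rst h (B (j+1))) :=
              Finset.sum_le_sum (fun j _ => rip_upper hRIPak (by linarith) (hB_sp j))
          _ = Real.sqrt (1+δak) * ∑ j ∈ Finset.range Tᶜ.card, E2 (Rst h (B (j+1))) := by
              rw [Finset.mul_sum]
          _ ≤ Real.sqrt (1+δak) * ((∑ x ∈ Tᶜ, |h x|) / Real.sqrt ak) :=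
              mul_le_mul_of_nonneg_left hblocks_sum (Real.sqrt_nonneg _)
      have hE2Sf : E2 (Rst h (T ∪ B 0))
          ≤ Real.sqrt (1+δak) * ((∑ x ∈ Tᶜ, |h x|) / Real.sqrt ak) / Real.sqrt (1-δa1k) := by
        rw [le_div_iff₀ sq1δ]
        calc E2 (Rst h (T ∪ B 0)) * Real.sqrt (1-δa1k)
            = Real.sqrt (1-δa1k) * E2 (Rst h (T ∪ B 0)) := by ring
          _ ≤ _ := chain1
      -- Cauchy–Schwarz on T
      have hCS : ∑ i ∈ T, |h i| ≤ Real.sqrt k * E2 (Rst h (T ∪ B 0)) := by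
        have h2 := Real.sum_mul_le_sqrt_mul_sqrt T (fun _ => (1:ℝ)) (fun i => |h i|)
        simp only [one_mul, one_pow, Finset.sum_const, nsmul_eq_mul, mul_one, sq_abs] at h2
        have hsub : ∑ i ∈ T, (h i)^2 ≤ ∑ i, (Rst h (T ∪ B 0) i)^2 := by
          rw [sum_sq_Rst]
          exact Finset.sum_le_sum_of_subset_of_nonneg Finset.subset_union_left
            (fun i _ _ => sq_nonneg _)
        calc ∑ i ∈ T, |h i| ≤ Real.sqrt (T.card) * Real.sqrt (∑ i ∈ T, (h i)^2) := h2
          _ ≤ Real.sqrt k * E2 (Rst h (T ∪ B 0)) := by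
              refine mul_le_mul ?_ ?_ (Real.sqrt_nonneg _) (Real.sqrt_nonneg _)
              · exact Real.sqrt_le_sqrt (by exact_mod_cast hT)
              · exact Real.sqrt_le_sqrt hsub
      -- combine
      have hfin : ∑ i ∈ T, |h i| ≤ Real.sqrt k *
          (Real.sqrt (1+δak) * ((∑ x ∈ Tᶜ, |h x|) / Real.sqrt ak) / Real.sqrt (1-δa1k)) :=
        hCS.trans (mul_le_mul_of_nonneg_left hE2Sf (Real.sqrt_nonneg _))
      have hsqk : (0:ℝ) < Real.sqrt k := Real.sqrt_pos.mpr (by exact_mod_cast hk)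
      have hsqakeq : Real.sqrt (ak : ℝ) = Real.sqrt a * Real.sqrt k := by
        rw [hak_def]
        push_cast
        exact Real.sqrt_mul (by positivity) _
      have heq : Real.sqrt k *
          (Real.sqrt (1+δak) * ((∑ x ∈ Tᶜ, |h x|) / Real.sqrt ak) / Real.sqrt (1-δa1k))
          = c1 * ∑ x ∈ Tᶜ, |h x| := by
        rw [hc1, hsqakeq]
        field_simp
      rw [← heq]
      exact hfin
  calc ∑ i ∈ T, |h i| + ∑ i ∈ Tᶜ, |h i|
      ≤ c1 * ∑ i ∈ Tᶜ, |h i| + ∑ i ∈ Tᶜ, |h i| := by linarith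
    _ = ∑ i ∈ Tᶜ, |h i| + c1 * ∑ i ∈ Tᶜ, |h i| := by ring
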